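/- Let p be a prime and let X be a finite simplicial complex with an action of Z/p, with fixed point set X^{Z/p}. Then χ(X) ≡ χ(X^{Z/p}) (mod p). -/

import Mathlib

open Finset MulAction

lemma lemA (p : ℕ) (hp : p.Prime) (S : Type) [Fintype S] [DecidableEq S]
    (g : Equiv.Perm S) (hgp : g ^ p = 1) :
    (p : ℤ) ∣ (Fintype.card S : ℤ) -
      ((Finset.univ.filter fun s : S => g s = s).card : ℤ) := by
  haveI : Fact p.Prime := ⟨hp⟩
  have hord : orderOf g ∣ p := orderOf_dvd_of_pow_eq_one hgp
  have hpow : ∀ m n : ℕ, m % p = n % p → g ^ m = g ^ n := by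
    intro m n h
    rw [pow_eq_pow_iff_modEq]
    exact Nat.ModEq.of_dvd hord h
  let f : Multiplicative (ZMod p) →* Equiv.Perm S :=
    { toFun := fun x => g ^ (Multiplicative.toAdd x).val
      map_one' := by simp
      map_mul' := by
        intro a b
        simp only [toAdd_mul, ← pow_add]
        apply hpow
        simp [ZMod.val_add, Nat.mod_mod_of_dvd] }
  letI : MulAction (Multiplicative (ZMod p)) S := MulAction.compHom S f
  have hact : ∀ (x : Multiplicative (ZMod p)) (s : S),
      x • s = (g ^ (Multiplicative.toAdd x).val) s := fun _ _ => rfl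
  have hPG : IsPGroup p (Multiplicative (ZMod p)) := by
    apply IsPGroup.of_card (n := 1)
    simp [Nat.card_eq_fintype_card, pow_one]
  have hmod := hPG.card_modEq_card_fixedPoints S
  have hfix : Nat.card (fixedPoints (Multiplicative (ZMod p)) S) =
      (Finset.univ.filter fun s : S => g s = s).card := by
    have : fixedPoints (Multiplicative (ZMod p)) S = {s : S | g s = s} := by
      ext s
      simp only [mem_fixedPoints, Set.mem_setOf_eq]
      constructor
      · intro h
        have := h (Multiplicative.ofAdd (1 : ZMod p))
        rwa [hact, toAdd_ofAdd, ZMod.val_one p, pow_one] at this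
      · intro h x
        rw [hact]
        clear hact
        induction (Multiplicative.toAdd x).val with
        | zero => simp
        | succ n ih => rw [pow_succ]; simp [ih, h]
    rw [this]
    simp [Nat.card_eq_fintype_card, Set.toFinset_setOf, Fintype.card_subtype]
  rw [Nat.card_eq_fintype_card, hfix] at hmod
  exact (Nat.modEq_iff_dvd).mp hmod.symm

lemma lemB (p : ℕ) (hp : p.Prime) (S : Type) [Fintype S] [DecidableEq S]
    (g : Equiv.Perm S) (hgp : g ^ p = 1) (P : S → Prop) [DecidablePred P]
    (hinv : ∀ s, P s ↔ P (g s)) :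
    (p : ℤ) ∣ ((Finset.univ.filter P).card : ℤ) -
      ((Finset.univ.filter fun s : S => P s ∧ g s = s).card : ℤ) := by
  classical
  set T := {s : S // P s}
  let g' : Equiv.Perm T := g.subtypePerm (fun s => (hinv s).symm)
  have hg'p : g' ^ p = 1 := by
    rw [show g' = g.subtypePerm (fun s => (hinv s).symm) from rfl, Equiv.Perm.subtypePerm_pow]
    ext x
    simp [hgp]
  have h := lemA p hp T g' hg'p
  have hcard : Fintype.card T = (Finset.univ.filter P).card := by
    simp [T, Fintype.card_subtype]
  have hfix : (Finset.univ.filter fun t : T => g' t = t).card =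
      (Finset.univ.filter fun s : S => P s ∧ g s = s).card := by
    apply Finset.card_bij (fun t _ => t.1)
    · intro t ht
      simp only [Finset.mem_filter, Finset.mem_univ, true_and] at ht ⊢
      exact ⟨t.2, congrArg Subtype.val ht⟩
    · intro a ha b hb hab
      exact Subtype.ext hab
    · intro s hs
      simp only [Finset.mem_filter, Finset.mem_univ, true_and] at hs
      exact ⟨⟨s, hs.1⟩, by
        simp only [Finset.mem_filter, Finset.mem_univ, true_and]
        exact Subtype.ext hs.2, rfl⟩
  rw [hcard, hfix] at h
  exact h

theorem stmt1 (p : ℕ) (hp : p.Prime) (S : Type) [Fintype S] [DecidableEq S]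
    (dim : S → ℕ) (g : Equiv.Perm S)
    (hgp : g ^ p = 1)
    (hdim : ∀ s, dim (g s) = dim s) :
    (p : ℤ) ∣ (∑ s : S, (-1 : ℤ) ^ dim s) -
      ∑ s ∈ Finset.univ.filter (fun s : S => g s = s), (-1 : ℤ) ^ dim s := by
  classical
  have key : ∀ (F : Finset S), (∑ s ∈ F, (-1 : ℤ) ^ dim s) =
      ((F.filter fun s => Even (dim s)).card : ℤ) -
      ((F.filter fun s => ¬ Even (dim s)).card : ℤ) := by
    intro F
    rw [← Finset.sum_filter_add_sum_filter_not F (fun s => Even (dim s))]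
    rw [Finset.sum_congr rfl (fun s hs => (Finset.mem_filter.mp hs).2.neg_one_pow),
        Finset.sum_congr rfl (fun s hs =>
          (Nat.not_even_iff_odd.mp (Finset.mem_filter.mp hs).2).neg_one_pow)]
    simp [sub_eq_add_neg]
  rw [key, key]
  have h1 := lemB p hp S g hgp (fun s => Even (dim s)) (fun s => by simp [hdim])
  have h2 := lemB p hp S g hgp (fun s => ¬ Even (dim s)) (fun s => by simp [hdim])
  have e1 : (Finset.univ.filter fun s : S => g s = s).filter (fun s => Even (dim s)) =
      Finset.univ.filter fun s : S => Even (dim s) ∧ g s = s := by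
    rw [Finset.filter_filter]
    exact Finset.filter_congr fun s _ => and_comm
  have e2 : (Finset.univ.filter fun s : S => g s = s).filter (fun s => ¬ Even (dim s)) =
      Finset.univ.filter fun s : S => ¬ Even (dim s) ∧ g s = s := by
    rw [Finset.filter_filter]
    exact Finset.filter_congr fun s _ => and_comm
  rw [e1, e2]
  have : ((Finset.univ.filter fun s : S => Even (dim s)).card : ℤ) -
      ((Finset.univ.filter fun s : S => ¬ Even (dim s)).card : ℤ) -
      (((Finset.univ.filter fun s : S => Even (dim s) ∧ g s = s).card : ℤ) -
      ((Finset.univ.filter fun s : S => ¬ Even (dim s) ∧ g s = s).card : ℤ)) =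
      (((Finset.univ.filter fun s : S => Even (dim s)).card : ℤ) -
      ((Finset.univ.filter fun s : S => Even (dim s) ∧ g s = s).card : ℤ)) -
      (((Finset.univ.filter fun s : S => ¬ Even (dim s)).card : ℤ) -
      ((Finset.univ.filter fun s : S => ¬ Even (dim s) ∧ g s = s).card : ℤ)) := by ring
  rw [this]
  exact dvd_sub h1 h2
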